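/- Let p < q be integers and set k := (if 0 ≤ p then 1 else 0) + (if 0 ≤ q then 1 else 0) - 1 ∈ ℤ. Then the function s ↦ s^k · Γ_ℂ(s-p) · Γ_ℂ(s-q) · sin(π(s-q))/2 tends to (-1)^q · (2π)^{p+q+1} · Γ*(-p) · Γ*(-q) as s tends to 0 within the punctured neighborhood of 0 in ℂ (s^k denoting the integer power). -/

import Mathlib

open Filter Topology

/-- The complexified archimedean Euler factor `Γ_ℂ(s) = 2 (2π)^{-s} Γ(s)`. -/
noncomputable def GammaC (s : ℂ) : ℂ := 2 * (2 * (Real.pi : ℂ)) ^ (-s) * Complex.Gamma s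

/-- The leading Taylor coefficient of the Gamma function at the integer `j`. -/
def GammaStar (j : ℤ) : ℚ :=
  if 1 ≤ j then ((j - 1).toNat.factorial : ℚ)
  else (-1 : ℚ) ^ j / ((-j).toNat.factorial : ℚ)

namespace LfacAux

open Complex Finset

lemma neg_one_zpow_neg (k : ℤ) : (-1 : ℂ) ^ (-k) = (-1) ^ k := by
  rw [zpow_neg]
  rcases Int.even_or_odd k with h | h
  · rw [h.neg_one_zpow]; norm_num
  · rw [h.neg_one_zpow]; norm_num

lemma small_ne_int {s : ℂ} (h0 : s ≠ 0) (h1 : ‖s‖ < 1) (k : ℤ) : s ≠ (k : ℂ) := by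
  intro hc
  rcases eq_or_ne k 0 with rfl | hk
  · exact h0 (by simpa using hc)
  · have : (1 : ℝ) ≤ ‖(k : ℂ)‖ := by
      rw [Complex.norm_intCast]
      exact_mod_cast Int.one_le_abs hk
    rw [hc] at h1; linarith

lemma small_ne_nat {s : ℂ} (h0 : s ≠ 0) (h1 : ‖s‖ < 1) (j : ℕ) : s ≠ (j : ℂ) := by
  have := small_ne_int h0 h1 (j : ℤ)
  simpa using this

lemma contGamma (k : ℕ) : ContinuousAt Complex.Gamma ((k : ℂ) + 1) := by
  refine (Complex.differentiableAt_Gamma _ fun m => ?_).continuousAt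
  intro hc
  have h2 := congrArg Complex.re hc
  simp at h2
  have hk : (0:ℝ) ≤ (k:ℝ) := Nat.cast_nonneg k
  have hm : (0:ℝ) ≤ (m:ℝ) := Nat.cast_nonneg m
  linarith

lemma prod_neg_succ (n : ℕ) :
    (∏ i ∈ Finset.range n, (-(i : ℂ) - 1)) = (-1) ^ n * n.factorial := by
  induction n with
  | zero => simp
  | succ n ih =>
    rw [Finset.prod_range_succ, ih, Nat.factorial_succ]
    push_cast; ring

lemma gamma_prod (n : ℕ) : ∀ s : ℂ, (∀ j : ℕ, j ≤ n → s ≠ (j : ℂ)) →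
    (∏ j ∈ Finset.range (n + 1), (s - (j : ℕ))) * Complex.Gamma (s - n) =
      Complex.Gamma (s + 1) := by
  induction n with
  | zero =>
    intro s h
    simp only [Nat.cast_zero, sub_zero, zero_add, Finset.range_one, Finset.prod_singleton]
    exact (Complex.Gamma_add_one s (by simpa using h 0 le_rfl)).symm
  | succ n ih =>
    intro s h
    have h1 : s - ((n + 1 : ℕ) : ℂ) ≠ 0 := by
      have := h (n + 1) le_rfl
      intro hc; exact this (by rwa [sub_eq_zero] at hc)
    have key : (s - ((n + 1 : ℕ) : ℂ)) * Complex.Gamma (s - ((n + 1 : ℕ) : ℂ)) =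
        Complex.Gamma (s - n) := by
      rw [show (s - (n:ℂ)) = (s - ((n + 1 : ℕ) : ℂ)) + 1 by push_cast; ring]
      exact (Complex.Gamma_add_one _ h1).symm
    rw [Finset.prod_range_succ, mul_assoc, key]
    exact ih s fun j hj => h j (Nat.le_succ_of_le hj)

lemma eventually_small : ∀ᶠ s : ℂ in 𝓝[≠] 0, s ≠ 0 ∧ ‖s‖ < 1 := by
  have h1 : ∀ᶠ s : ℂ in 𝓝[≠] 0, s ≠ 0 := eventually_mem_nhdsWithin
  have h2 : ∀ᶠ s : ℂ in 𝓝 (0 : ℂ), ‖s‖ < 1 := by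
    have := Metric.ball_mem_nhds (0 : ℂ) one_pos
    filter_upwards [this] with s hs
    simpa [dist_eq_norm] using hs
  exact h1.and (eventually_nhdsWithin_of_eventually_nhds h2)

lemma L1 (n : ℕ) : Tendsto (fun s : ℂ => s * Complex.Gamma (s - n)) (𝓝[≠] 0)
    (𝓝 ((-1) ^ n / n.factorial)) := by
  have hden : Tendsto (fun s : ℂ => ∏ i ∈ Finset.range n, (s - ((i + 1 : ℕ) : ℂ)))
      (𝓝[≠] 0) (𝓝 ((-1) ^ n * n.factorial)) := by
    have hcont : Continuous fun s : ℂ => ∏ i ∈ Finset.range n, (s - ((i + 1 : ℕ) : ℂ)) :=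
      continuous_finset_prod _ fun i _ => continuous_id.sub continuous_const
    have hval : (∏ i ∈ Finset.range n, ((0 : ℂ) - ((i + 1 : ℕ) : ℂ))) = (-1) ^ n * n.factorial := by
      rw [← prod_neg_succ n]
      exact Finset.prod_congr rfl fun i _ => by push_cast; ring
    have := hcont.tendsto 0
    rw [hval] at this
    exact this.mono_left nhdsWithin_le_nhds
  have hnum : Tendsto (fun s : ℂ => Complex.Gamma (s + 1)) (𝓝[≠] 0) (𝓝 1) := by
    have ht : Tendsto (fun s : ℂ => s + 1) (𝓝 0) (𝓝 1) := by
      exact (continuous_id.add continuous_const : Continuous fun s : ℂ => s + 1).tendsto' 0 1 (by norm_num)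
    have hg : Tendsto Complex.Gamma (𝓝 (1 : ℂ)) (𝓝 1) := by
      have h : ContinuousAt Complex.Gamma (1 : ℂ) := by simpa using contGamma 0
      simpa [Complex.Gamma_one] using h.tendsto
    have := hg.comp ht
    simp only [Function.comp_def] at this
    exact this.mono_left nhdsWithin_le_nhds
  have hlim : Tendsto (fun s : ℂ =>
      Complex.Gamma (s + 1) / ∏ i ∈ Finset.range n, (s - ((i + 1 : ℕ) : ℂ)))
      (𝓝[≠] 0) (𝓝 ((-1) ^ n / n.factorial)) := by
    have hne : ((-1 : ℂ) ^ n * n.factorial) ≠ 0 :=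
      mul_ne_zero (pow_ne_zero _ (by norm_num)) (Nat.cast_ne_zero.2 n.factorial_ne_zero)
    have := hnum.div hden hne
    have hval : (1 : ℂ) / ((-1) ^ n * n.factorial) = (-1) ^ n / n.factorial := by
      have hinv : ((-1 : ℂ) ^ n)⁻¹ = (-1) ^ n := by
        rcases Nat.even_or_odd n with h | h
        · rw [h.neg_one_pow]; norm_num
        · rw [h.neg_one_pow]; norm_num
      rw [one_div, mul_inv, hinv, div_eq_mul_inv]
    rwa [hval] at this
  refine hlim.congr' ?_
  filter_upwards [eventually_small] with s hs
  obtain ⟨h0, h1⟩ := hs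
  have hP : ∀ i ∈ Finset.range n, s - ((i + 1 : ℕ) : ℂ) ≠ 0 := fun i _ => by
    have := small_ne_nat h0 h1 (i + 1); intro hc; exact this (by rwa [sub_eq_zero] at hc)
  have hPne : (∏ i ∈ Finset.range n, (s - ((i + 1 : ℕ) : ℂ))) ≠ 0 :=
    Finset.prod_ne_zero_iff.2 hP
  have hgp := gamma_prod n s fun j _ => small_ne_nat h0 h1 j
  rw [Finset.prod_range_succ'] at hgp
  simp only [Nat.cast_zero, sub_zero] at hgp
  rw [div_eq_iff hPne]
  linear_combination -hgp

lemma L3 (m : ℕ) : Tendsto (fun s : ℂ => s * Complex.Gamma (-(m : ℂ) - s)) (𝓝[≠] 0)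
    (𝓝 ((-1) ^ (m + 1) / m.factorial)) := by
  have hden : Tendsto (fun s : ℂ => ∏ i ∈ Finset.range m, (-s - ((i + 1 : ℕ) : ℂ)))
      (𝓝[≠] 0) (𝓝 ((-1) ^ m * m.factorial)) := by
    have hcont : Continuous fun s : ℂ => ∏ i ∈ Finset.range m, (-s - ((i + 1 : ℕ) : ℂ)) :=
      continuous_finset_prod _ fun i _ => continuous_neg.sub continuous_const
    have hval : (∏ i ∈ Finset.range m, (-(0 : ℂ) - ((i + 1 : ℕ) : ℂ))) = (-1) ^ m * m.factorial := by
      rw [← prod_neg_succ m]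
      exact Finset.prod_congr rfl fun i _ => by push_cast; ring
    have := hcont.tendsto 0
    rw [hval] at this
    exact this.mono_left nhdsWithin_le_nhds
  have hnum : Tendsto (fun s : ℂ => Complex.Gamma (-s + 1)) (𝓝[≠] 0) (𝓝 1) := by
    have ht : Tendsto (fun s : ℂ => -s + 1) (𝓝 0) (𝓝 1) := by
      exact (continuous_neg.add continuous_const : Continuous fun s : ℂ => -s + 1).tendsto' 0 1 (by norm_num)
    have hg : Tendsto Complex.Gamma (𝓝 (1 : ℂ)) (𝓝 1) := by
      have h : ContinuousAt Complex.Gamma (1 : ℂ) := by simpa using contGamma 0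
      simpa [Complex.Gamma_one] using h.tendsto
    have := hg.comp ht
    simp only [Function.comp_def] at this
    exact this.mono_left nhdsWithin_le_nhds
  have hlim : Tendsto (fun s : ℂ =>
      -(Complex.Gamma (-s + 1) / ∏ i ∈ Finset.range m, (-s - ((i + 1 : ℕ) : ℂ))))
      (𝓝[≠] 0) (𝓝 ((-1) ^ (m + 1) / m.factorial)) := by
    have hne : ((-1 : ℂ) ^ m * m.factorial) ≠ 0 :=
      mul_ne_zero (pow_ne_zero _ (by norm_num)) (Nat.cast_ne_zero.2 m.factorial_ne_zero)
    have := (hnum.div hden hne).neg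
    have hval : -((1 : ℂ) / ((-1) ^ m * m.factorial)) = (-1) ^ (m + 1) / m.factorial := by
      have hinv : ((-1 : ℂ) ^ m)⁻¹ = (-1) ^ m := by
        rcases Nat.even_or_odd m with h | h
        · rw [h.neg_one_pow]; norm_num
        · rw [h.neg_one_pow]; norm_num
      rw [one_div, mul_inv, hinv, pow_succ]
      ring
    rwa [hval] at this
  refine hlim.congr' ?_
  filter_upwards [eventually_small] with s hs
  obtain ⟨h0, h1⟩ := hs
  have h0' : -s ≠ 0 := neg_ne_zero.2 h0
  have h1' : ‖-s‖ < 1 := by rwa [norm_neg]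
  have hPne : (∏ i ∈ Finset.range m, (-s - ((i + 1 : ℕ) : ℂ))) ≠ 0 :=
    Finset.prod_ne_zero_iff.2 fun i _ => by
      have := small_ne_nat h0' h1' (i + 1); intro hc; exact this (by rwa [sub_eq_zero] at hc)
  have hgp := gamma_prod m (-s) fun j _ => small_ne_nat h0' h1' j
  rw [Finset.prod_range_succ'] at hgp
  simp only [Nat.cast_zero, sub_zero] at hgp
  rw [show -(m : ℂ) - s = -s - m by ring]
  rw [neg_eq_iff_eq_neg, div_eq_iff hPne]
  linear_combination -hgp

lemma gsNeg (r : ℤ) (hr : 0 ≤ r) :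
    ((GammaStar (-r) : ℚ) : ℂ) = (-1) ^ r / (r.toNat.factorial : ℂ) := by
  rw [GammaStar, if_neg (by omega), neg_neg]
  push_cast
  rw [neg_one_zpow_neg]

lemma gsPos (r : ℤ) (hr : 1 ≤ r) :
    ((GammaStar r : ℚ) : ℂ) = ((r - 1).toNat.factorial : ℂ) := by
  rw [GammaStar, if_pos hr]
  push_cast
  ring

end LfacAux

open LfacAux Complex

theorem tendsto_Lfactor_pq (p q : ℤ) (hpq : p < q) :
    Tendsto
      (fun s : ℂ =>
        s ^ ((if (0 : ℤ) ≤ p then (1 : ℤ) else 0) + (if (0 : ℤ) ≤ q then (1 : ℤ) else 0) - 1) *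
          GammaC (s - (p : ℂ)) * GammaC (s - (q : ℂ)) *
          Complex.sin ((Real.pi : ℂ) * (s - (q : ℂ))) / 2)
      (𝓝[≠] (0 : ℂ))
      (𝓝 ((-1 : ℂ) ^ q * (2 * (Real.pi : ℂ)) ^ (p + q + 1) *
        ((GammaStar (-p) : ℚ) : ℂ) * ((GammaStar (-q) : ℚ) : ℂ))) := by
  have hπ : (Real.pi : ℂ) ≠ 0 := Complex.ofReal_ne_zero.2 Real.pi_ne_zero
  have hc : (2 * (Real.pi : ℂ)) ≠ 0 := mul_ne_zero two_ne_zero hπ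
  set k : ℤ := (if (0 : ℤ) ≤ p then (1 : ℤ) else 0) + (if (0 : ℤ) ≤ q then (1 : ℤ) else 0) - 1
    with hk
  suffices H : Tendsto (fun s : ℂ => s ^ k *
      ((2 * (Real.pi : ℂ)) ^ ((p : ℂ) + (q : ℂ) + 1 - 2 * s) *
        (Complex.Gamma (s - (p : ℂ)) * (Complex.Gamma (1 - (s - (q : ℂ))))⁻¹)))
      (𝓝[≠] (0 : ℂ))
      (𝓝 ((-1 : ℂ) ^ q * (2 * (Real.pi : ℂ)) ^ (p + q + 1) *
        ((GammaStar (-p) : ℚ) : ℂ) * ((GammaStar (-q) : ℚ) : ℂ))) by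
    refine H.congr' ?_
    filter_upwards [eventually_small] with s hs
    obtain ⟨h0, h1⟩ := hs
    have hsin : Complex.sin ((Real.pi : ℂ) * (s - (q : ℂ))) ≠ 0 := by
      rw [Ne, Complex.sin_eq_zero_iff]
      rintro ⟨k', hk'⟩
      have h2 : (Real.pi : ℂ) * (s - (q : ℂ)) = (Real.pi : ℂ) * (k' : ℂ) := by
        rw [hk']; ring
      have h3 := mul_left_cancel₀ hπ h2
      exact small_ne_int h0 h1 (q + k') (by push_cast; linear_combination h3)
    have hGne : Complex.Gamma (1 - (s - (q : ℂ))) ≠ 0 := by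
      refine Complex.Gamma_ne_zero fun m => ?_
      intro hcont
      exact small_ne_int h0 h1 (q + 1 + m) (by push_cast; linear_combination -hcont)
    have hrefl := Complex.Gamma_mul_Gamma_one_sub (s - (q : ℂ))
    rw [eq_div_iff hsin] at hrefl
    have hkey : Complex.Gamma (s - (q : ℂ)) * Complex.sin ((Real.pi : ℂ) * (s - (q : ℂ))) =
        (Real.pi : ℂ) * (Complex.Gamma (1 - (s - (q : ℂ))))⁻¹ := by
      field_simp
      rw [mul_comm (s - (q : ℂ)) (Real.pi : ℂ)]
      linear_combination hrefl
    simp only [GammaC]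
    rw [show (p : ℂ) + (q : ℂ) + 1 - 2 * s = (-(s - (p : ℂ))) + (-(s - (q : ℂ))) + 1 by ring,
      Complex.cpow_add _ _ hc, Complex.cpow_add _ _ hc, Complex.cpow_one]
    linear_combination (-2 * s ^ k * ((2 * (Real.pi : ℂ)) ^ (-(s - (p : ℂ)))) *
      ((2 * (Real.pi : ℂ)) ^ (-(s - (q : ℂ)))) * Complex.Gamma (s - (p : ℂ))) * hkey
  -- the cpow factor
  have T1 : Tendsto (fun s : ℂ => (2 * (Real.pi : ℂ)) ^ ((p : ℂ) + (q : ℂ) + 1 - 2 * s))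
      (𝓝[≠] (0 : ℂ)) (𝓝 ((2 * (Real.pi : ℂ)) ^ (p + q + 1))) := by
    have hcont : ContinuousAt (fun s : ℂ => (2 * (Real.pi : ℂ)) ^ ((p : ℂ) + (q : ℂ) + 1 - 2 * s))
        0 :=
      (continuousAt_const_cpow hc).comp
        ((continuous_const.sub (continuous_const.mul continuous_id)).continuousAt)
    have h : Tendsto (fun s : ℂ => (2 * (Real.pi : ℂ)) ^ ((p : ℂ) + (q : ℂ) + 1 - 2 * s))
        (𝓝[≠] (0 : ℂ)) (𝓝 ((2 * (Real.pi : ℂ)) ^ ((p : ℂ) + (q : ℂ) + 1 - 2 * (0 : ℂ)))) :=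
      hcont.tendsto.mono_left nhdsWithin_le_nhds
    rw [show (p : ℂ) + (q : ℂ) + 1 - 2 * (0 : ℂ) = ((p + q + 1 : ℤ) : ℂ) by push_cast; ring,
      Complex.cpow_intCast] at h
    exact h
  by_cases hp : (0 : ℤ) ≤ p
  · -- Case A : 0 ≤ p < q
    have hq : (0 : ℤ) ≤ q := le_trans hp hpq.le
    have hk1 : k = 1 := by rw [hk, if_pos hp, if_pos hq]; norm_num
    set pn : ℕ := p.toNat with hpn_def
    set qn : ℕ := q.toNat with hqn_def
    have hpZ : ((pn : ℤ)) = p := Int.toNat_of_nonneg hp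
    have hqZ : ((qn : ℤ)) = q := Int.toNat_of_nonneg hq
    have hpc : (p : ℂ) = (pn : ℂ) := by exact_mod_cast hpZ.symm
    have hqc : (q : ℂ) = (qn : ℂ) := by exact_mod_cast hqZ.symm
    have T2 : Tendsto (fun s : ℂ => s * Complex.Gamma (s - (p : ℂ))) (𝓝[≠] (0 : ℂ))
        (𝓝 ((-1) ^ pn / pn.factorial)) := by
      have := L1 pn
      simpa [← hpc] using this
    have T3 : Tendsto (fun s : ℂ => (Complex.Gamma (1 - (s - (q : ℂ))))⁻¹) (𝓝[≠] (0 : ℂ))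
        (𝓝 ((qn.factorial : ℂ))⁻¹) := by
      have ht : Tendsto (fun s : ℂ => 1 - (s - (q : ℂ))) (𝓝 0) (𝓝 ((qn : ℂ) + 1)) := by
        have hco : Continuous (fun s : ℂ => 1 - (s - (q : ℂ))) := by fun_prop
        have := hco.tendsto 0
        rwa [show (1 : ℂ) - ((0 : ℂ) - (q : ℂ)) = (qn : ℂ) + 1 by rw [hqc]; ring] at this
      have hg : Tendsto Complex.Gamma (𝓝 ((qn : ℂ) + 1)) (𝓝 (qn.factorial : ℂ)) := by
        have := (contGamma qn).tendsto
        rwa [Complex.Gamma_nat_eq_factorial] at this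
      have := (hg.comp ht).mono_left (nhdsWithin_le_nhds (s := {(0:ℂ)}ᶜ))
      simp only [Function.comp_def] at this
      exact this.inv₀ (Nat.cast_ne_zero.2 qn.factorial_ne_zero)
    have TT := (T1.mul T2).mul T3
    have hval : (2 * (Real.pi : ℂ)) ^ (p + q + 1) * ((-1) ^ pn / (pn.factorial : ℂ)) *
        ((qn.factorial : ℂ))⁻¹ =
        (-1 : ℂ) ^ q * (2 * (Real.pi : ℂ)) ^ (p + q + 1) *
          ((GammaStar (-p) : ℚ) : ℂ) * ((GammaStar (-q) : ℚ) : ℂ) := by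
      rw [gsNeg p hp, gsNeg q hq]
      have h1 : ((-1 : ℂ)) ^ p = (-1) ^ pn := by rw [← hpZ, zpow_natCast]
      have h2 : ((-1 : ℂ)) ^ q * (-1) ^ q = 1 := by
        rw [← zpow_add₀ (by norm_num : (-1 : ℂ) ≠ 0)]
        exact (Even.neg_one_zpow ⟨q, rfl⟩)
      rw [h1]
      linear_combination (-((2 * (Real.pi : ℂ)) ^ (p + q + 1) * (-1 : ℂ) ^ pn /
        ((pn.factorial : ℂ) * (qn.factorial : ℂ)))) * h2
    rw [← hval]
    exact TT.congr fun s => by rw [hk1, zpow_one]; ring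
  · by_cases hq : (0 : ℤ) ≤ q
    · -- Case B : p < 0 ≤ q
      have hk0 : k = 0 := by rw [hk, if_neg hp, if_pos hq]; norm_num
      set a : ℕ := (-p - 1).toNat with ha_def
      set qn : ℕ := q.toNat with hqn_def
      have haZ : ((a : ℤ)) = -p - 1 := Int.toNat_of_nonneg (by omega)
      have hqZ : ((qn : ℤ)) = q := Int.toNat_of_nonneg hq
      have hpc : (p : ℂ) = -(a : ℂ) - 1 := by
        have : (p : ℤ) = -(a : ℤ) - 1 := by omega
        exact_mod_cast congrArg (fun x : ℤ => (x : ℂ)) this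
      have hqc : (q : ℂ) = (qn : ℂ) := by exact_mod_cast hqZ.symm
      have TΓp : Tendsto (fun s : ℂ => Complex.Gamma (s - (p : ℂ))) (𝓝[≠] (0 : ℂ))
          (𝓝 ((a.factorial : ℂ))) := by
        have ht : Tendsto (fun s : ℂ => s - (p : ℂ)) (𝓝 0) (𝓝 ((a : ℂ) + 1)) := by
          have hco : Continuous (fun s : ℂ => s - (p : ℂ)) := by fun_prop
          have := hco.tendsto 0
          rwa [show (0 : ℂ) - (p : ℂ) = (a : ℂ) + 1 by rw [hpc]; ring] at this
        have hg : Tendsto Complex.Gamma (𝓝 ((a : ℂ) + 1)) (𝓝 (a.factorial : ℂ)) := by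
          have := (contGamma a).tendsto
          rwa [Complex.Gamma_nat_eq_factorial] at this
        have := (hg.comp ht).mono_left (nhdsWithin_le_nhds (s := {(0:ℂ)}ᶜ))
        simpa only [Function.comp_def] using this
      have T3 : Tendsto (fun s : ℂ => (Complex.Gamma (1 - (s - (q : ℂ))))⁻¹) (𝓝[≠] (0 : ℂ))
          (𝓝 ((qn.factorial : ℂ))⁻¹) := by
        have ht : Tendsto (fun s : ℂ => 1 - (s - (q : ℂ))) (𝓝 0) (𝓝 ((qn : ℂ) + 1)) := by
          have hco : Continuous (fun s : ℂ => 1 - (s - (q : ℂ))) := by fun_prop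
          have := hco.tendsto 0
          rwa [show (1 : ℂ) - ((0 : ℂ) - (q : ℂ)) = (qn : ℂ) + 1 by rw [hqc]; ring] at this
        have hg : Tendsto Complex.Gamma (𝓝 ((qn : ℂ) + 1)) (𝓝 (qn.factorial : ℂ)) := by
          have := (contGamma qn).tendsto
          rwa [Complex.Gamma_nat_eq_factorial] at this
        have := (hg.comp ht).mono_left (nhdsWithin_le_nhds (s := {(0:ℂ)}ᶜ))
        simp only [Function.comp_def] at this
        exact this.inv₀ (Nat.cast_ne_zero.2 qn.factorial_ne_zero)
      have TT := (T1.mul TΓp).mul T3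
      have hval : (2 * (Real.pi : ℂ)) ^ (p + q + 1) * (a.factorial : ℂ) *
          ((qn.factorial : ℂ))⁻¹ =
          (-1 : ℂ) ^ q * (2 * (Real.pi : ℂ)) ^ (p + q + 1) *
            ((GammaStar (-p) : ℚ) : ℂ) * ((GammaStar (-q) : ℚ) : ℂ) := by
        rw [gsPos (-p) (by omega), gsNeg q hq]
        rw [show (-p - 1).toNat = a from rfl]
        have h2 : ((-1 : ℂ)) ^ q * (-1) ^ q = 1 := by
          rw [← zpow_add₀ (by norm_num : (-1 : ℂ) ≠ 0)]
          exact (Even.neg_one_zpow ⟨q, rfl⟩)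
        linear_combination (-((2 * (Real.pi : ℂ)) ^ (p + q + 1) * (a.factorial : ℂ) /
          (qn.factorial : ℂ))) * h2
      rw [← hval]
      exact TT.congr fun s => by rw [hk0, zpow_zero]; ring
    · -- Case C : p < q < 0
      have hk1 : k = -1 := by rw [hk, if_neg hp, if_neg hq]; norm_num
      set a : ℕ := (-p - 1).toNat with ha_def
      set m : ℕ := (-q - 1).toNat with hm_def
      have haZ : ((a : ℤ)) = -p - 1 := Int.toNat_of_nonneg (by omega)
      have hmZ : ((m : ℤ)) = -q - 1 := Int.toNat_of_nonneg (by omega)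
      have hpc : (p : ℂ) = -(a : ℂ) - 1 := by
        have : (p : ℤ) = -(a : ℤ) - 1 := by omega
        exact_mod_cast congrArg (fun x : ℤ => (x : ℂ)) this
      have hqc : (q : ℂ) = -(m : ℂ) - 1 := by
        have : (q : ℤ) = -(m : ℤ) - 1 := by omega
        exact_mod_cast congrArg (fun x : ℤ => (x : ℂ)) this
      have TΓp : Tendsto (fun s : ℂ => Complex.Gamma (s - (p : ℂ))) (𝓝[≠] (0 : ℂ))
          (𝓝 ((a.factorial : ℂ))) := by
        have ht : Tendsto (fun s : ℂ => s - (p : ℂ)) (𝓝 0) (𝓝 ((a : ℂ) + 1)) := by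
          have hco : Continuous (fun s : ℂ => s - (p : ℂ)) := by fun_prop
          have := hco.tendsto 0
          rwa [show (0 : ℂ) - (p : ℂ) = (a : ℂ) + 1 by rw [hpc]; ring] at this
        have hg : Tendsto Complex.Gamma (𝓝 ((a : ℂ) + 1)) (𝓝 (a.factorial : ℂ)) := by
          have := (contGamma a).tendsto
          rwa [Complex.Gamma_nat_eq_factorial] at this
        have := (hg.comp ht).mono_left (nhdsWithin_le_nhds (s := {(0:ℂ)}ᶜ))
        simpa only [Function.comp_def] using this
      have Tinv : Tendsto (fun s : ℂ => (s * Complex.Gamma (-(m : ℂ) - s))⁻¹) (𝓝[≠] (0 : ℂ))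
          (𝓝 ((-1) ^ (m + 1) * (m.factorial : ℂ))) := by
        have hne : ((-1 : ℂ) ^ (m + 1) / (m.factorial : ℂ)) ≠ 0 :=
          div_ne_zero (pow_ne_zero _ (by norm_num)) (Nat.cast_ne_zero.2 m.factorial_ne_zero)
        have := (L3 m).inv₀ hne
        have hval2 : ((-1 : ℂ) ^ (m + 1) / (m.factorial : ℂ))⁻¹ =
            (-1) ^ (m + 1) * (m.factorial : ℂ) := by
          have hinv : ((-1 : ℂ) ^ (m + 1))⁻¹ = (-1) ^ (m + 1) := by
            rcases Nat.even_or_odd (m + 1) with h | h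
            · rw [h.neg_one_pow]; norm_num
            · rw [h.neg_one_pow]; norm_num
          rw [inv_div, div_eq_mul_inv, hinv]
          ring
        rwa [hval2] at this
      have TT := (T1.mul TΓp).mul Tinv
      have hval : (2 * (Real.pi : ℂ)) ^ (p + q + 1) * (a.factorial : ℂ) *
          ((-1) ^ (m + 1) * (m.factorial : ℂ)) =
          (-1 : ℂ) ^ q * (2 * (Real.pi : ℂ)) ^ (p + q + 1) *
            ((GammaStar (-p) : ℚ) : ℂ) * ((GammaStar (-q) : ℚ) : ℂ) := by
        rw [gsPos (-p) (by omega), gsPos (-q) (by omega)]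
        rw [show (-p - 1).toNat = a from rfl, show (-q - 1).toNat = m from rfl]
        have h2 : ((-1 : ℂ)) ^ q = (-1) ^ (m + 1) := by
          have : q = -((m + 1 : ℕ) : ℤ) := by omega
          rw [this, neg_one_zpow_neg, zpow_natCast]
        rw [h2]
        ring
      rw [← hval]
      refine TT.congr fun s => ?_
      rw [hk1, show (1 : ℂ) - (s - (q : ℂ)) = -(m : ℂ) - s by rw [hqc]; ring, zpow_neg_one,
        mul_inv]
      ring
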